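/- Peschel–Emery line of the ANNNI model: Let r > 0 be a real number. In Matrix (Fin 2) (Fin 2) ℂ let σx = !![0,1;1,0], σz = !![1,0;0,−1], and m = !![1,0;0,r]. Working with 4×4 matrices via the Kronecker product ⊗, set L = σx ⊗ 1 − 1 ⊗ σx, L̃ = (m ⊗ m) * L * (m ⊗ m)⁻¹, and C = (r²/2) • (m⁻² ⊗ m⁻²). Then L̃ᴴ * C * L̃ = −(σx ⊗ σx) + Jz • (σz ⊗ σz) + (B/2) • (σz ⊗ 1 + 1 ⊗ σz) + ε • 1, where Jz = (r − r⁻¹)²/4, B = (r² − r⁻²)/2, and ε = (r + r⁻¹)²/4. -/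

import Mathlib

set_option maxHeartbeats 1000000
open Matrix
open scoped Kronecker Matrix

private lemma kron_conjT {n : Type*} [Fintype n] [DecidableEq n]
    (A B : Matrix n n ℂ) : (A ⊗ₖ B)ᴴ = Aᴴ ⊗ₖ Bᴴ := by
  ext ⟨i, j⟩ ⟨k, l⟩
  simp [Matrix.conjTranspose_apply, Matrix.kroneckerMap_apply, mul_comm]

/-- Peschel–Emery line of the ANNNI model: conjugating the classical Ising term
`L = σx ⊗ 1 - 1 ⊗ σx` by `m ⊗ m` with `m = diag(1, r)` and central term
`C = (r²/2) m⁻² ⊗ m⁻²` yields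
`L̃ᴴ C L̃ = -σx⊗σx + Jz σz⊗σz + (B/2)(σz⊗1 + 1⊗σz) + ε`. -/
theorem ANNNI_Peschel_Emery_line (r : ℝ) (hr : 0 < r) :
    let σx : Matrix (Fin 2) (Fin 2) ℂ := !![0, 1; 1, 0]
    let σz : Matrix (Fin 2) (Fin 2) ℂ := !![1, 0; 0, -1]
    let m : Matrix (Fin 2) (Fin 2) ℂ := !![1, 0; 0, (r : ℂ)]
    let L : Matrix (Fin 2 × Fin 2) (Fin 2 × Fin 2) ℂ := σx ⊗ₖ 1 - 1 ⊗ₖ σx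
    let L' : Matrix (Fin 2 × Fin 2) (Fin 2 × Fin 2) ℂ := (m ⊗ₖ m) * L * (m ⊗ₖ m)⁻¹
    let C : Matrix (Fin 2 × Fin 2) (Fin 2 × Fin 2) ℂ :=
      ((r ^ 2 / 2 : ℝ) : ℂ) • ((m⁻¹ ^ 2) ⊗ₖ (m⁻¹ ^ 2))
    let Jz : ℂ := ((r - r⁻¹) ^ 2 / 4 : ℝ)
    let B : ℂ := ((r ^ 2 - r⁻¹ ^ 2) / 2 : ℝ)
    let ε : ℂ := ((r + r⁻¹) ^ 2 / 4 : ℝ)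
    L'ᴴ * C * L' = -(σx ⊗ₖ σx) + Jz • (σz ⊗ₖ σz) + (B / 2) • (σz ⊗ₖ 1 + 1 ⊗ₖ σz) + ε • 1 := by
  intro σx σz m L L' C Jz B ε
  have hrc : (r : ℂ) ≠ 0 := by exact_mod_cast hr.ne'
  have hminv : m⁻¹ = !![1, 0; 0, (r : ℂ)⁻¹] := by
    apply inv_eq_right_inv
    simp [m, Matrix.mul_fin_two, hrc, ← Matrix.one_fin_two]
  set A : Matrix (Fin 2) (Fin 2) ℂ := !![0, (r : ℂ)⁻¹; (r : ℂ), 0] with hA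
  have hmm : m * m⁻¹ = 1 := by
    rw [hminv]; simp [m, Matrix.mul_fin_two, hrc, ← Matrix.one_fin_two]
  have hAeq : m * σx * m⁻¹ = A := by
    rw [hminv]; simp [m, σx, hA, Matrix.mul_fin_two]
  have hL' : L' = A ⊗ₖ 1 - 1 ⊗ₖ A := by
    show (m ⊗ₖ m) * L * (m ⊗ₖ m)⁻¹ = _
    rw [Matrix.inv_kronecker]
    have e1 : (m ⊗ₖ m) * (σx ⊗ₖ 1) * (m⁻¹ ⊗ₖ m⁻¹) = A ⊗ₖ 1 := by
      rw [← Matrix.mul_kronecker_mul, ← Matrix.mul_kronecker_mul, hAeq, Matrix.mul_one, hmm]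
    have e2 : (m ⊗ₖ m) * (1 ⊗ₖ σx) * (m⁻¹ ⊗ₖ m⁻¹) = 1 ⊗ₖ A := by
      rw [← Matrix.mul_kronecker_mul, ← Matrix.mul_kronecker_mul, hAeq, Matrix.mul_one, hmm]
    rw [show L = σx ⊗ₖ 1 - 1 ⊗ₖ σx from rfl, Matrix.mul_sub, Matrix.sub_mul, e1, e2]
  set n : Matrix (Fin 2) (Fin 2) ℂ := !![1, 0; 0, (r : ℂ)⁻¹ * (r : ℂ)⁻¹] with hn
  have hC : C = ((r ^ 2 / 2 : ℝ) : ℂ) • (n ⊗ₖ n) := by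
    show ((r ^ 2 / 2 : ℝ) : ℂ) • ((m⁻¹ ^ 2) ⊗ₖ (m⁻¹ ^ 2)) = _
    rw [hminv]
    congr 1 <;> · rw [pow_two]; simp [hn, Matrix.mul_fin_two]
  have hL'H : L'ᴴ = Aᴴ ⊗ₖ 1 - 1 ⊗ₖ Aᴴ := by
    rw [hL', Matrix.conjTranspose_sub, kron_conjT, kron_conjT, Matrix.conjTranspose_one]
  rw [hL'H, hC, hL']
  rw [Matrix.mul_smul, Matrix.smul_mul]
  simp only [Matrix.sub_mul, Matrix.mul_sub]
  simp only [← Matrix.mul_kronecker_mul, Matrix.mul_one, Matrix.one_mul]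
  have hAH : Aᴴ = !![0, (r : ℂ); (r : ℂ)⁻¹, 0] := by
    rw [hA]
    ext i j
    fin_cases i <;> fin_cases j <;>
      simp [Matrix.conjTranspose_apply, Complex.conj_ofReal, map_inv₀]
  rw [hAH]
  ext ⟨i, j⟩ ⟨k, l⟩
  fin_cases i <;> fin_cases j <;> fin_cases k <;> fin_cases l <;>
    · simp only [hAH, hA, hn, σx, σz, Jz, B, ε, Matrix.smul_apply, Matrix.sub_apply, Matrix.add_apply,
        Matrix.neg_apply, Matrix.kroneckerMap_apply, Matrix.mul_fin_two, Matrix.one_fin_two,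
        Matrix.cons_val', Matrix.cons_val_zero, Matrix.cons_val_one, Matrix.head_cons,
        Matrix.head_fin_const, Matrix.empty_val', Matrix.cons_val_fin_one, smul_eq_mul, Matrix.one_apply, Prod.mk.injEq, Fin.mk.injEq,
        ite_true, ite_false, if_true, if_false, and_true, and_false, true_and, false_and]
      try norm_num
      try push_cast
      try field_simp
      try ring
      try (rw [inv_pow]; field_simp; ring)
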